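/- arXiv:1311.0798 — 6 statements merged into one kernel-verified Lean document; each statement's English description precedes it below -/
import Mathlib

section
/- With the heavy-path labeling scheme, the labeling function v ↦ ℓ(v) is injective: distinct nodes of the rooted tree receive distinct labels. -/
/-- A finite rooted tree, given by a parent function converging to the root. -/
structure ParentTree (V : Type*) where
  root : V
  parent : V → V
  parent_root : parent root = root
  parent_ne : ∀ v, v ≠ root → parent v ≠ v
  reaches_root : ∀ v, ∃ n, parent^[n] v = root

namespace ParentTree

variable {V : Type*}

/-- `u` is in the subtree rooted at `v` (i.e. `v` is an ancestor of `u`, possibly `u` itself). -/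
def Descend (t : ParentTree V) (v u : V) : Prop := ∃ n, t.parent^[n] u = v

/-- Number of vertices of the subtree rooted at `v`. -/
noncomputable def size (t : ParentTree V) (v : V) : ℕ := Nat.card {u | t.Descend v u}

/-- `c` is a child of `v`. -/
def IsChild (t : ParentTree V) (c v : V) : Prop := c ≠ t.root ∧ t.parent c = v

end ParentTree

/-- `heavy` designates, for every node with at least one child, a child of
maximal subtree size (the heavy child). -/
def HeavyChoice {V : Type*} [Fintype V] (t : ParentTree V) (heavy : V → V) : Prop :=
  ∀ v, (∃ c, t.IsChild c v) →
    t.IsChild (heavy v) v ∧ ∀ c, t.IsChild c v → t.size c ≤ t.size (heavy v)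

/-- The heavy-path labeling scheme: the root is labeled `[(id root, 0)]`;
a heavy child takes its parent's label with the last distance incremented;
a light child appends the pair `(own id, 0)` to its parent's label. -/
def HeavyLabeling {V : Type*} [Fintype V] (t : ParentTree V) (heavy : V → V)
    (id : V → ℕ) (ℓ : V → List (ℕ × ℕ)) : Prop :=
  HeavyChoice t heavy ∧ Function.Injective id ∧
  ℓ t.root = [(id t.root, 0)] ∧
  ∀ v, v ≠ t.root →
    (v = heavy (t.parent v) →
      ∃ L x d, ℓ (t.parent v) = L ++ [(x, d)] ∧ ℓ v = L ++ [(x, d + 1)]) ∧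
    (v ≠ heavy (t.parent v) → ℓ v = ℓ (t.parent v) ++ [(id v, 0)])

/-- The heavy-path labeling is injective: distinct nodes get distinct labels. -/
theorem stmt9 {V : Type*} [Fintype V] (t : ParentTree V) (heavy : V → V)
    (id : V → ℕ) (ℓ : V → List (ℕ × ℕ)) (hl : HeavyLabeling t heavy id ℓ) :
    Function.Injective ℓ := by
  obtain ⟨hheavy, hid, hroot, hstep⟩ := hl
  have key : ∀ n (v : V), t.parent^[n] v = t.root →
      ∃ L x d w, ℓ v = L ++ [(x, d)] ∧ id w = x ∧ heavy^[d] w = v := by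
    intro n
    induction n with
    | zero =>
      intro v hv
      simp only [Function.iterate_zero, _root_.id] at hv
      subst hv
      exact ⟨[], id t.root, 0, t.root, by simpa using hroot, rfl, rfl⟩
    | succ n ih =>
      intro v hv
      by_cases hvr : v = t.root
      · subst hvr
        exact ⟨[], id t.root, 0, t.root, by simpa using hroot, rfl, rfl⟩
      · have hpar : t.parent^[n] (t.parent v) = t.root := by
          rwa [Function.iterate_succ_apply] at hv
        obtain ⟨L, x, d, w, hL, hw, hwd⟩ := ih (t.parent v) hpar
        obtain ⟨hh, hlight⟩ := hstep v hvr
        by_cases hvh : v = heavy (t.parent v)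
        · obtain ⟨L', x', d', hL', hv'⟩ := hh hvh
          rw [hL] at hL'
          obtain ⟨hLL, hlast⟩ := List.append_inj' hL' rfl
          simp only [List.cons.injEq, Prod.mk.injEq] at hlast
          obtain ⟨⟨hx, hd⟩, -⟩ := hlast
          refine ⟨L', x, d + 1, w, by rw [hv', hx, hd], hw, ?_⟩
          rw [Function.iterate_succ_apply', hwd, ← hvh]
        · refine ⟨ℓ (t.parent v), id v, 0, v, hlight hvh, rfl, rfl⟩
  intro u v h
  obtain ⟨nu, hnu⟩ := t.reaches_root u
  obtain ⟨nv, hnv⟩ := t.reaches_root v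
  obtain ⟨L, x, d, w, hL, hw, hwd⟩ := key nu u hnu
  obtain ⟨L', x', d', w', hL', hw', hwd'⟩ := key nv v hnv
  rw [h, hL'] at hL
  obtain ⟨-, hlast⟩ := List.append_inj' hL.symm rfl
  simp only [List.cons.injEq, Prod.mk.injEq] at hlast
  obtain ⟨⟨hx, hd⟩, -⟩ := hlast
  have hww : w = w' := hid (by rw [hw, hw', hx])
  rw [← hwd, ← hwd', hww, hd]
end

section
/- With the heavy-path labeling scheme, for any node v, the label of every ancestor of v is determined by ℓ(v): a node a is an ancestor of v if and only if ℓ(a) is obtained from ℓ(v) by taking a prefix of the pair list and possibly decreasing the distance component of its last pair. Consequently, ℓ(a) is a 'prefix' of ℓ(v) in this sense. -/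
/-- `ℓ₁ ⪯ ℓ₂`: `ℓ₁` is obtained from `ℓ₂` by taking a prefix of the pair list and
possibly decreasing the distance component of its last pair. -/
def LabelPrefix (ℓ₁ ℓ₂ : List (ℕ × ℕ)) : Prop :=
  ∃ (P S : List (ℕ × ℕ)) (x d d' : ℕ),
    ℓ₂ = P ++ [(x, d)] ++ S ∧ ℓ₁ = P ++ [(x, d')] ∧ d' ≤ d


section Aux

variable {V : Type*} (t : ParentTree V)

open Classical in
/-- depth of a node: number of parent steps to the root. -/
noncomputable def depAux (v : V) : ℕ := Nat.find (t.reaches_root v)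

open Classical in
lemma depAux_spec (v : V) : t.parent^[depAux t v] v = t.root := Nat.find_spec (t.reaches_root v)

lemma depAux_root : depAux t t.root = 0 := by
  classical
  exact Nat.le_zero.mp (Nat.find_min' _ (by simp))

lemma depAux_zero {v : V} (h : depAux t v = 0) : v = t.root := by
  have := depAux_spec t v; rw [h] at this; simpa using this

lemma depAux_parent_lt {v : V} (h : v ≠ t.root) : depAux t (t.parent v) < depAux t v := by
  have hs := depAux_spec t v
  have hne : depAux t v ≠ 0 := fun h0 => h (depAux_zero t h0)
  obtain ⟨m, hm⟩ := Nat.exists_eq_succ_of_ne_zero hne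
  have : t.parent^[m] (t.parent v) = t.root := by
    rw [← Function.iterate_succ_apply]; rw [hm] at hs; exact hs
  have hle : depAux t (t.parent v) ≤ m := by
    classical exact Nat.find_min' _ this
  omega

end Aux

lemma exists_concat_of_ne_nil {α : Type*} {l : List α} (h : l ≠ []) :
    ∃ L x, l = L ++ [x] := by
  rcases l.eq_nil_or_concat with rfl | ⟨L, x, hx⟩
  · exact absurd rfl h
  · exact ⟨L, x, by simpa [List.concat_eq_append] using hx⟩

lemma labelPrefix_trans {a b c : List (ℕ × ℕ)} (h1 : LabelPrefix a b)
    (h2 : LabelPrefix b c) : LabelPrefix a c := by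
  obtain ⟨P, S, x, d, d', hb, ha, hdd⟩ := h1
  obtain ⟨Q, T, y, e, e', hc, hb2, hee⟩ := h2
  rcases eq_or_ne S [] with rfl | hS
  · -- b = P ++ [(x,d)], also b = Q ++ [(y,e')]
    rw [hb2, List.append_nil] at hb
    obtain ⟨hPQ, hxy⟩ := List.append_inj' hb.symm rfl
    simp only [List.cons.injEq, Prod.mk.injEq] at hxy
    obtain ⟨⟨rfl, rfl⟩, -⟩ := hxy
    exact ⟨P, T, x, e, d', by rw [hc, hPQ], ha, le_trans hdd hee⟩
  · obtain ⟨S', q, rfl⟩ := exists_concat_of_ne_nil hS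
    rw [hb2] at hb
    have : Q ++ [(y, e')] = (P ++ [(x, d)] ++ S') ++ [q] := by
      rw [hb]; simp [List.append_assoc]
    obtain ⟨hQ, hq⟩ := List.append_inj' this rfl
    refine ⟨P, S' ++ [(y, e)] ++ T, x, d, d', ?_, ha, hdd⟩
    rw [hc, hQ]; simp [List.append_assoc]

section Lab

variable {V : Type*} [Fintype V] {t : ParentTree V} {heavy : V → V}
  {id : V → ℕ} {ℓ : V → List (ℕ × ℕ)} (hl : HeavyLabeling t heavy id ℓ)

include hl

lemma lab_ne_nil (v : V) : ℓ v ≠ [] := by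
  obtain ⟨-, -, hroot, hstep⟩ := hl
  by_cases h : v = t.root
  · subst h; rw [hroot]; simp
  · obtain ⟨hh, hlight⟩ := hstep v h
    by_cases hv : v = heavy (t.parent v)
    · obtain ⟨L, x, d, -, hv'⟩ := hh hv; rw [hv']; simp
    · rw [hlight hv]; simp

lemma labelPrefix_refl (v : V) : LabelPrefix (ℓ v) (ℓ v) := by
  obtain ⟨L, q, hLq⟩ := exists_concat_of_ne_nil (lab_ne_nil hl v)
  exact ⟨L, [], q.1, q.2, q.2, by simp [hLq], by simp [hLq], le_rfl⟩

/-- step: label of parent is a prefix of label of child -/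
lemma labelPrefix_parent {v : V} (h : v ≠ t.root) :
    LabelPrefix (ℓ (t.parent v)) (ℓ v) := by
  obtain ⟨hh, hlight⟩ := hl.2.2.2 v h
  by_cases hv : v = heavy (t.parent v)
  · obtain ⟨L, x, d, hp, hv'⟩ := hh hv
    exact ⟨L, [], x, d + 1, d, by simp [hv'], hp, by omega⟩
  · have hv' := hlight hv
    obtain ⟨L, q, hLq⟩ := exists_concat_of_ne_nil (lab_ne_nil hl (t.parent v))
    exact ⟨L, [(id v, 0)], q.1, q.2, q.2, by simp [hv', hLq], hLq, le_rfl⟩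

lemma lab_root_unique {b : V} (h : ℓ b = ℓ t.root) : b = t.root := by
  by_contra hb
  have hroot := hl.2.2.1
  obtain ⟨hh, hlight⟩ := hl.2.2.2 b hb
  rw [hroot] at h
  by_cases hv : b = heavy (t.parent b)
  · obtain ⟨L, x, d, -, hv'⟩ := hh hv
    rw [hv'] at h
    have h2 : L ++ [(x, d + 1)] = [] ++ [(id t.root, 0)] := by simpa using h
    obtain ⟨-, hq⟩ := List.append_inj' h2 (by simp)
    simp at hq
  · have hv' := hlight hv
    rw [hv'] at h
    have := lab_ne_nil hl (t.parent b)
    have hlen := congrArg List.length h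
    simp at hlen
    exact this hlen

lemma lab_injective : Function.Injective ℓ := by
  suffices H : ∀ n a b, depAux t a ≤ n → ℓ a = ℓ b → a = b by
    intro a b h; exact H _ a b le_rfl h
  intro n
  induction n with
  | zero =>
    intro a b ha he
    have : a = t.root := depAux_zero t (Nat.le_zero.mp ha)
    subst this
    exact (lab_root_unique hl he.symm).symm
  | succ n ih =>
    intro a b ha he
    by_cases hra : a = t.root
    · subst hra; exact (lab_root_unique hl he.symm).symm
    by_cases hrb : b = t.root
    · subst hrb; exact lab_root_unique hl he
    obtain ⟨hha, hla⟩ := hl.2.2.2 a hra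
    obtain ⟨hhb, hlb⟩ := hl.2.2.2 b hrb
    by_cases hva : a = heavy (t.parent a) <;> by_cases hvb : b = heavy (t.parent b)
    · obtain ⟨L, x, d, hpa, hva'⟩ := hha hva
      obtain ⟨L', x', d', hpb, hvb'⟩ := hhb hvb
      rw [hva', hvb'] at he
      obtain ⟨hLL, hq⟩ := List.append_inj' he rfl
      simp only [List.cons.injEq, Prod.mk.injEq] at hq
      obtain ⟨⟨rfl, hd⟩, -⟩ := hq
      have hd' : d = d' := by omega
      have hpe : ℓ (t.parent a) = ℓ (t.parent b) := by rw [hpa, hpb, hLL, hd']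
      have hdep : depAux t (t.parent a) ≤ n := by
        have := depAux_parent_lt t hra; omega
      have hp := ih _ _ hdep hpe
      rw [hva, hvb, hp]
    · obtain ⟨L, x, d, -, hva'⟩ := hha hva
      rw [hva', hlb hvb] at he
      obtain ⟨-, hq⟩ := List.append_inj' he (by simp)
      simp at hq
    · obtain ⟨L, x, d, -, hvb'⟩ := hhb hvb
      rw [hvb', hla hva] at he
      obtain ⟨-, hq⟩ := List.append_inj' he (by simp)
      simp at hq
    · rw [hla hva, hlb hvb] at he
      obtain ⟨-, hq⟩ := List.append_inj' he (by simp)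
      simp only [List.cons.injEq, Prod.mk.injEq] at hq
      exact hl.2.1 hq.1.1

/-- descending step for the backward direction -/
lemma labelPrefix_step {a v : V} (h : v ≠ t.root)
    (hp : LabelPrefix (ℓ a) (ℓ v)) :
    ℓ a = ℓ v ∨ LabelPrefix (ℓ a) (ℓ (t.parent v)) := by
  obtain ⟨P, S, x, d, d', hv, haeq, hdd⟩ := hp
  obtain ⟨hh, hlight⟩ := hl.2.2.2 v h
  by_cases hvv : v = heavy (t.parent v)
  · obtain ⟨L, y, e, hpar, hvl⟩ := hh hvv
    rcases eq_or_ne S [] with rfl | hS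
    · rw [List.append_nil, hvl] at hv
      obtain ⟨hLP, hq⟩ := List.append_inj' hv rfl
      simp only [List.cons.injEq, Prod.mk.injEq] at hq
      obtain ⟨⟨hyx, hed⟩, -⟩ := hq
      by_cases hde : d' = e + 1
      · left; rw [haeq, hvl, hLP, hyx, hde]
      · right
        refine ⟨P, [], x, e, d', ?_, haeq, by omega⟩
        rw [hpar, hLP, hyx]; simp
    · obtain ⟨S', q, rfl⟩ := exists_concat_of_ne_nil hS
      rw [hvl] at hv
      have h2 : (P ++ [(x, d)] ++ S') ++ [q] = L ++ [(y, e + 1)] := by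
        simpa [List.append_assoc] using hv.symm
      obtain ⟨hL, -⟩ := List.append_inj' h2 rfl
      right
      refine ⟨P, S' ++ [(y, e)], x, d, d', ?_, haeq, hdd⟩
      rw [hpar, ← hL]; simp [List.append_assoc]
  · have hvl := hlight hvv
    rcases eq_or_ne S [] with rfl | hS
    · rw [List.append_nil, hvl] at hv
      obtain ⟨hLP, hq⟩ := List.append_inj' hv rfl
      simp only [List.cons.injEq, Prod.mk.injEq] at hq
      obtain ⟨⟨hyx, h0⟩, -⟩ := hq
      left
      have hd0 : d' = 0 := by omega
      rw [haeq, hvl, ← hLP, ← hyx, hd0, h0]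
    · obtain ⟨S', q, rfl⟩ := exists_concat_of_ne_nil hS
      rw [hvl] at hv
      have h2 : (P ++ [(x, d)] ++ S') ++ [q] = ℓ (t.parent v) ++ [(id v, 0)] := by
        simpa [List.append_assoc] using hv.symm
      obtain ⟨hL, -⟩ := List.append_inj' h2 rfl
      right
      exact ⟨P, S', x, d, d', hL.symm, haeq, hdd⟩

lemma back : ∀ n (v a : V), depAux t v ≤ n → LabelPrefix (ℓ a) (ℓ v) → t.Descend a v := by
  intro n
  induction n with
  | zero =>
    intro v a hv hp
    have hroot : v = t.root := depAux_zero t (Nat.le_zero.mp hv)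
    subst hroot
    obtain ⟨P, S, x, d, d', hv2, ha, hdd⟩ := hp
    rw [hl.2.2.1] at hv2
    match P, S, hv2 with
    | [], [], hv2 =>
      simp only [List.nil_append, List.append_nil, List.cons.injEq, Prod.mk.injEq] at hv2
      obtain ⟨⟨rfl, rfl⟩, -⟩ := hv2
      have : d' = 0 := Nat.le_zero.mp hdd
      have hae : ℓ a = ℓ t.root := by rw [ha, hl.2.2.1, this]; simp
      exact ⟨0, by simp [lab_injective hl hae]⟩
    | (p :: ps), S, hv2 =>
      exfalso
      have := congrArg List.length hv2
      simp at this
  | succ n ih =>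
    intro v a hv hp
    by_cases hroot : v = t.root
    · subst hroot
      exact ih t.root a (by rw [depAux_root]; exact Nat.zero_le n) hp
    · rcases labelPrefix_step hl hroot hp with heq | hpp
      · exact ⟨0, by simp [lab_injective hl heq]⟩
      · have hdep : depAux t (t.parent v) ≤ n := by
          have := depAux_parent_lt t hroot; omega
        obtain ⟨k, hk⟩ := ih (t.parent v) a hdep hpp
        exact ⟨k + 1, by rw [Function.iterate_succ_apply]; exact hk⟩

end Lab

/-- `a` is an ancestor of `v` (including `v` itself) iff `ℓ a ⪯ ℓ v`; in particular
the labels of all ancestors of `v` are determined by `ℓ v`. -/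
theorem stmt10 {V : Type*} [Fintype V] (t : ParentTree V) (heavy : V → V)
    (id : V → ℕ) (ℓ : V → List (ℕ × ℕ)) (hl : HeavyLabeling t heavy id ℓ) :
    ∀ a v : V, t.Descend a v ↔ LabelPrefix (ℓ a) (ℓ v) := by
  intro a v
  constructor
  · rintro ⟨n, hn⟩
    induction n generalizing v with
    | zero => simp at hn; subst hn; exact labelPrefix_refl hl v
    | succ n ihn =>
      by_cases hr : v = t.root
      · subst hr
        rw [Function.iterate_succ_apply, t.parent_root] at hn
        exact ihn t.root hn
      · rw [Function.iterate_succ_apply] at hn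
        exact labelPrefix_trans (ihn (t.parent v) hn) (labelPrefix_parent hl hr)
  · intro hp
    exact back hl (depAux t v) v a le_rfl hp
end

section
/- With the heavy-path labeling scheme, the nearest common ancestor of two nodes u and v in the same rooted tree is computable from ℓ(u) and ℓ(v) alone: its label equals the longest common prefix of the two pair lists, extended by the pair with the common identifier and the minimum of the two distance values at the first position where the lists differ (if the identifiers at that position agree), and is otherwise exactly the longest common prefix position handled analogously; in particular, ℓ(nca(u,v)) is a function of (ℓ(u), ℓ(v)). -/
namespace HPL

abbrev Lab := List (ℕ × ℕ)

/-- `Dom A U`: `A` is an "ancestor label" of `U`. -/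
def Dom (A U : Lab) : Prop :=
  ∃ (P : Lab) (x d d' : ℕ) (R : Lab),
    A = P ++ [(x, d)] ∧ U = P ++ [(x, d')] ++ R ∧ d ≤ d'

/-- The decoder. -/
def F : Lab → Lab → Lab
  | (x, d) :: l1, (y, e) :: l2 =>
    if x = y then (if d = e then (x, d) :: F l1 l2 else [(x, min d e)]) else []
  | _, _ => []

lemma F_nil_left (l : Lab) : F [] l = [] := by cases l <;> rfl

lemma F_nil_right (l : Lab) : F l [] = [] := by
  cases l with
  | nil => rfl
  | cons p l => rcases p with ⟨x, d⟩; rfl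

lemma F_cons (x d y e : ℕ) (l1 l2 : Lab) :
    F ((x,d) :: l1) ((y,e) :: l2) =
      if x = y then (if d = e then (x, d) :: F l1 l2 else [(x, min d e)]) else [] := rfl

lemma cons_dom {A U : Lab} (p : ℕ × ℕ) (h : Dom A U) : Dom (p :: A) (p :: U) := by
  obtain ⟨P, x, d, d', R, h1, h2, h3⟩ := h
  exact ⟨p :: P, x, d, d', R, by simp [h1], by simp [h2], h3⟩

lemma last_eq {P Q : Lab} {x d y e : ℕ} (h : P ++ [(x, d)] = Q ++ [(y, e)]) :
    P = Q ∧ x = y ∧ d = e := by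
  obtain ⟨h1, h2⟩ := List.append_inj' h rfl
  simp at h2
  exact ⟨h1, h2.1, h2.2⟩

lemma dom_refl {l : Lab} (h : l ≠ []) : Dom l l := by
  rcases List.eq_nil_or_concat l with rfl | ⟨L, b, rfl⟩
  · exact absurd rfl h
  · exact ⟨L, b.1, b.2, b.2, [], by simp, by simp, le_refl _⟩

lemma pref_step {P : Lab} {c : ℕ × ℕ} {R M : Lab} {q : ℕ × ℕ}
    (h : P ++ [c] ++ R = M ++ [q]) (hR : R ≠ []) : ∃ T, M = P ++ [c] ++ T := by
  have hlen : (P ++ [c]).length ≤ M.length := by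
    have hl := congrArg List.length h
    have hR' : 1 ≤ R.length := List.length_pos_iff.mpr hR
    simp at hl ⊢
    omega
  have h1 : P ++ [c] <+: M ++ [q] := ⟨R, by simpa using h⟩
  have h2 : M <+: M ++ [q] := ⟨[q], rfl⟩
  obtain ⟨T, hT⟩ := List.prefix_of_prefix_length_le h1 h2 hlen
  exact ⟨T, hT.symm⟩

lemma dom_trans {A B C : Lab} (h1 : Dom A B) (h2 : Dom B C) : Dom A C := by
  obtain ⟨P, x, d, d', R, hA, hB, hdd⟩ := h1
  obtain ⟨Q, y, e, e', S, hB', hC, hee⟩ := h2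
  rcases eq_or_ne R [] with rfl | hR
  · simp at hB
    rw [hB] at hB'
    obtain ⟨rfl, rfl, rfl⟩ := last_eq hB'
    exact ⟨P, x, d, e', S, hA, hC, le_trans hdd hee⟩
  · rw [hB] at hB'
    obtain ⟨T, hT⟩ := pref_step hB' hR
    exact ⟨P, x, d, d', T ++ [(y, e')] ++ S, hA, by rw [hC, hT]; simp, hdd⟩

lemma D2' : ∀ (P : Lab) (x d d1 d2 : ℕ) (R1 R2 : Lab), d ≤ d1 → d ≤ d2 →
    Dom (P ++ [(x, d)]) (F (P ++ [(x, d1)] ++ R1) (P ++ [(x, d2)] ++ R2)) := by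
  intro P
  induction P with
  | nil =>
    intro x d d1 d2 R1 R2 h1 h2
    simp only [List.nil_append, List.cons_append, F_cons, if_pos rfl]
    rcases eq_or_ne d1 d2 with rfl | hne
    · rw [if_pos rfl]
      exact ⟨[], x, d, d1, F R1 R2, rfl, rfl, h1⟩
    · rw [if_neg hne]
      exact ⟨[], x, d, min d1 d2, [], rfl, rfl, le_min h1 h2⟩
  | cons p P ih =>
    intro x d d1 d2 R1 R2 h1 h2
    rcases p with ⟨a, b⟩
    simp only [List.cons_append, F_cons, if_pos rfl]
    exact cons_dom _ (ih x d d1 d2 R1 R2 h1 h2)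

lemma D2 {B l1 l2 : Lab} (h1 : Dom B l1) (h2 : Dom B l2) : Dom B (F l1 l2) := by
  obtain ⟨P, x, d, d1, R1, hB, hl1, hd1⟩ := h1
  obtain ⟨Q, y, e, d2, R2, hB', hl2, hd2⟩ := h2
  rw [hB] at hB'
  obtain ⟨rfl, rfl, rfl⟩ := last_eq hB'
  rw [hB, hl1, hl2]
  exact D2' P x d d1 d2 R1 R2 hd1 hd2

lemma D0 (x d1 d2 : ℕ) (r1 r2 : Lab) :
    Dom (F ((x, d1) :: r1) ((x, d2) :: r2)) ((x, d1) :: r1) ∧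
    Dom (F ((x, d1) :: r1) ((x, d2) :: r2)) ((x, d2) :: r2) := by
  induction r1 generalizing x d1 d2 r2 with
  | nil =>
    rw [F_cons, if_pos rfl]
    rcases eq_or_ne d1 d2 with rfl | hne
    · rw [if_pos rfl, F_nil_left]
      exact ⟨⟨[], x, d1, d1, [], rfl, rfl, le_refl _⟩,
             ⟨[], x, d1, d1, r2, rfl, rfl, le_refl _⟩⟩
    · rw [if_neg hne]
      exact ⟨⟨[], x, min d1 d2, d1, [], rfl, rfl, min_le_left _ _⟩,
             ⟨[], x, min d1 d2, d2, r2, rfl, rfl, min_le_right _ _⟩⟩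
  | cons q s1 ih =>
    rcases q with ⟨y1, e1⟩
    rw [F_cons, if_pos rfl]
    rcases eq_or_ne d1 d2 with rfl | hne
    · rw [if_pos rfl]
      rcases r2 with _ | ⟨⟨y2, e2⟩, s2⟩
      · rw [F_nil_right]
        exact ⟨⟨[], x, d1, d1, (y1, e1) :: s1, rfl, rfl, le_refl _⟩,
               ⟨[], x, d1, d1, [], rfl, rfl, le_refl _⟩⟩
      rcases eq_or_ne y1 y2 with rfl | hy
      · have := ih y1 e1 e2 s2
        exact ⟨cons_dom _ this.1, cons_dom _ this.2⟩
      · rw [F_cons, if_neg hy]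
        exact ⟨⟨[], x, d1, d1, (y1, e1) :: s1, rfl, rfl, le_refl _⟩,
               ⟨[], x, d1, d1, (y2, e2) :: s2, rfl, rfl, le_refl _⟩⟩
    · rw [if_neg hne]
      exact ⟨⟨[], x, min d1 d2, d1, (y1, e1) :: s1, rfl, rfl, min_le_left _ _⟩,
             ⟨[], x, min d1 d2, d2, r2, rfl, rfl, min_le_right _ _⟩⟩

end HPL

namespace HPL
section
set_option linter.unusedSectionVars false

variable {V : Type} [Fintype V] {t : ParentTree V} {heavy : V → V} {id : V → ℕ}
  {ℓ : V → List (ℕ × ℕ)}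

lemma root_iter (j : ℕ) : t.parent^[j] t.root = t.root := by
  induction j with
  | zero => rfl
  | succ j ih => rw [Function.iterate_succ_apply', ih, t.parent_root]

lemma cycle_eq_root {a : V} {k : ℕ} (hk : 0 < k) (hc : t.parent^[k] a = a) :
    a = t.root := by
  obtain ⟨N, hN⟩ := t.reaches_root a
  have hmul : ∀ j, t.parent^[k * j] a = a := by
    intro j
    induction j with
    | zero => simp
    | succ j ih => rw [Nat.mul_succ, Function.iterate_add_apply, hc, ih]
  have hbig : t.parent^[k * (N + 1)] a = t.root := by
    have hle : N + 1 ≤ k * (N + 1) := Nat.le_mul_of_pos_left _ hk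
    have h1 : k * (N + 1) = (k * (N + 1) - N) + N := by omega
    rw [h1, Function.iterate_add_apply, hN, root_iter]
  exact (hmul (N + 1)).symm.trans hbig

lemma descend_antisymm {a c : V} (h1 : t.Descend a c) (h2 : t.Descend c a) :
    a = c := by
  obtain ⟨n, hn⟩ := h1
  obtain ⟨m, hm⟩ := h2
  rcases Nat.eq_zero_or_pos (n + m) with hz | hp
  · have hm0 : m = 0 := by omega
    subst hm0
    simpa using hm
  · have hcyc : t.parent^[n + m] a = a := by
      rw [Function.iterate_add_apply, hm, hn]
    have ha := cycle_eq_root hp hcyc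
    have hcyc2 : t.parent^[m + n] c = c := by
      rw [Function.iterate_add_apply, hn, hm]
    have hc2 := cycle_eq_root (by omega) hcyc2
    rw [ha, hc2]

variable (h : HeavyLabeling t heavy id ℓ)
include h

lemma ell_ne (v : V) : ℓ v ≠ [] := by
  rcases eq_or_ne v t.root with rfl | hv
  · rw [h.2.2.1]; simp
  · rcases eq_or_ne v (heavy (t.parent v)) with hh | hh
    · obtain ⟨L, x, d, _, h2⟩ := (h.2.2.2 v hv).1 hh
      rw [h2]; simp
    · rw [(h.2.2.2 v hv).2 hh]; simp

lemma step_dom {v : V} (hv : v ≠ t.root) : Dom (ℓ (t.parent v)) (ℓ v) := by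
  rcases eq_or_ne v (heavy (t.parent v)) with hh | hh
  · obtain ⟨L, x, d, h1, h2⟩ := (h.2.2.2 v hv).1 hh
    exact ⟨L, x, d, d + 1, [], h1, by rw [h2]; simp, Nat.le_succ d⟩
  · have h2 := (h.2.2.2 v hv).2 hh
    rcases List.eq_nil_or_concat (ℓ (t.parent v)) with he | ⟨M, ⟨q1, q2⟩, hM⟩
    · exact absurd he (ell_ne h (t.parent v))
    · exact ⟨M, q1, q2, q2, [(id v, 0)], by rw [hM]; simp,
        by rw [h2, hM]; simp, le_refl _⟩

lemma dom_iter (n : ℕ) (u : V) : Dom (ℓ (t.parent^[n] u)) (ℓ u) := by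
  induction n with
  | zero => exact dom_refl (ell_ne h u)
  | succ n ih =>
    rw [Function.iterate_succ_apply']
    rcases eq_or_ne (t.parent^[n] u) t.root with hw | hw
    · rw [hw, t.parent_root, ← hw]; exact ih
    · exact dom_trans (step_dom h hw) ih

lemma label_root_unique {v : V} (hl : ℓ v = [(id t.root, 0)]) : v = t.root := by
  by_contra hv
  rcases eq_or_ne v (heavy (t.parent v)) with hh | hh
  · obtain ⟨L, x, d, _, h2⟩ := (h.2.2.2 v hv).1 hh
    rw [h2] at hl
    have hl' : L ++ [(x, d + 1)] = [] ++ [(id t.root, 0)] := by simpa using hl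
    obtain ⟨_, _, hd⟩ := last_eq hl'
    omega
  · have h2 := (h.2.2.2 v hv).2 hh
    rw [h2] at hl
    have hlen := congrArg List.length hl
    simp at hlen
    exact ell_ne h (t.parent v) hlen

lemma inj_aux : ∀ n : ℕ, ∀ u : V, t.parent^[n] u = t.root → ∀ b : V,
    ℓ b = ℓ u → b = u := by
  intro n
  induction n with
  | zero =>
    intro u hu b hb
    rw [Function.iterate_zero_apply] at hu
    subst hu
    exact label_root_unique h (hb.trans h.2.2.1)
  | succ n ih =>
    intro u hu b hb
    rcases eq_or_ne u t.root with rfl | hune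
    · exact label_root_unique h (hb.trans h.2.2.1)
    have hu' : t.parent^[n] (t.parent u) = t.root := by
      rwa [← Function.iterate_succ_apply]
    have hbne : b ≠ t.root := by
      rintro rfl
      exact hune (label_root_unique h (hb.symm.trans h.2.2.1))
    rcases eq_or_ne u (heavy (t.parent u)) with hhu | hhu
    · obtain ⟨L, x, d, hpu, hcu⟩ := (h.2.2.2 u hune).1 hhu
      rcases eq_or_ne b (heavy (t.parent b)) with hhb | hhb
      · obtain ⟨L', x', d', hpb, hcb⟩ := (h.2.2.2 b hbne).1 hhb
        rw [hcu, hcb] at hb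
        obtain ⟨hL, hx, hd⟩ := last_eq hb
        have hd' : d' = d := by omega
        have hpp : t.parent b = t.parent u :=
          ih (t.parent u) hu' (t.parent b) (by rw [hpb, hpu, hL, hx, hd'])
        rw [hhb, hhu, hpp]
      · have hcb := (h.2.2.2 b hbne).2 hhb
        rw [hcu, hcb] at hb
        obtain ⟨_, _, hd⟩ := last_eq hb
        omega
    · have hcu := (h.2.2.2 u hune).2 hhu
      rcases eq_or_ne b (heavy (t.parent b)) with hhb | hhb
      · obtain ⟨L', x', d', hpb, hcb⟩ := (h.2.2.2 b hbne).1 hhb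
        rw [hcu, hcb] at hb
        obtain ⟨_, _, hd⟩ := last_eq hb
        omega
      · have hcb := (h.2.2.2 b hbne).2 hhb
        rw [hcu, hcb] at hb
        obtain ⟨_, hx, _⟩ := last_eq hb
        exact h.2.1 hx

lemma step_down {u : V} (hu : u ≠ t.root) {A : Lab} (hA : Dom A (ℓ u))
    (hne : A ≠ ℓ u) : Dom A (ℓ (t.parent u)) := by
  obtain ⟨P, y, e, e', R, hA1, hA2, hee⟩ := hA
  rcases eq_or_ne u (heavy (t.parent u)) with hh | hh
  · obtain ⟨L, x, d, hpu, hcu⟩ := (h.2.2.2 u hu).1 hh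
    rcases eq_or_ne R [] with rfl | hR
    · simp only [List.append_nil] at hA2
      obtain ⟨hLP, hxy, hde⟩ := last_eq (hcu.symm.trans hA2)
      rcases (by omega : e ≤ d ∨ e = d + 1) with hed | hed
      · exact ⟨P, y, e, d, [], hA1, by rw [hpu, hLP, hxy]; simp, hed⟩
      · exact absurd (by rw [hA1, hcu, hLP, hxy, ← hed]) hne
    · obtain ⟨T, hT⟩ := pref_step (hA2.symm.trans hcu) hR
      exact ⟨P, y, e, e', T ++ [(x, d)], hA1, by rw [hpu, hT]; simp, hee⟩
  · have hcu := (h.2.2.2 u hu).2 hh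
    rcases eq_or_ne R [] with rfl | hR
    · simp only [List.append_nil] at hA2
      obtain ⟨hLP, hxy, hde⟩ := last_eq (hcu.symm.trans hA2)
      have he0 : e = 0 := by omega
      exact absurd (by rw [hA1, hcu, hLP, hxy, he0]) hne
    · obtain ⟨T, hT⟩ := pref_step (hA2.symm.trans hcu) hR
      exact ⟨P, y, e, e', T, hA1, hT, hee⟩

lemma dom_root {A : Lab} (hA : Dom A (ℓ t.root)) : A = ℓ t.root := by
  obtain ⟨P, y, e, e', R, hA1, hA2, hee⟩ := hA
  rw [h.2.2.1] at hA2
  have hlen := congrArg List.length hA2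
  simp at hlen
  have hP : P = [] := List.eq_nil_of_length_eq_zero (by omega)
  have hRl : R = [] := List.eq_nil_of_length_eq_zero (by omega)
  subst hP; subst hRl
  obtain ⟨_, hxy, hde⟩ :=
    last_eq (show ([] : Lab) ++ [(id t.root, 0)] = [] ++ [(y, e')] by simpa using hA2)
  have he : e = 0 := by omega
  rw [hA1, h.2.2.1, ← hxy, he]
  simp

lemma lemC : ∀ n : ℕ, ∀ u : V, t.parent^[n] u = t.root → ∀ A : Lab,
    Dom A (ℓ u) → ∃ b, t.Descend b u ∧ ℓ b = A := by
  intro n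
  induction n with
  | zero =>
    intro u hu A hA
    rw [Function.iterate_zero_apply] at hu
    subst hu
    exact ⟨t.root, ⟨0, rfl⟩, (dom_root h hA).symm⟩
  | succ n ih =>
    intro u hu A hA
    rcases eq_or_ne u t.root with rfl | hune
    · exact ⟨t.root, ⟨0, rfl⟩, (dom_root h hA).symm⟩
    rcases eq_or_ne A (ℓ u) with rfl | hne
    · exact ⟨u, ⟨0, rfl⟩, rfl⟩
    have hu' : t.parent^[n] (t.parent u) = t.root := by
      rwa [← Function.iterate_succ_apply]
    obtain ⟨b, ⟨k, hk⟩, hb⟩ := ih (t.parent u) hu' A (step_down h hune hA hne)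
    exact ⟨b, ⟨k + 1, by rw [Function.iterate_succ_apply, hk]⟩, hb⟩

lemma head_id : ∀ n : ℕ, ∀ v : V, t.parent^[n] v = t.root →
    ∃ d r, ℓ v = (id t.root, d) :: r := by
  intro n
  induction n with
  | zero =>
    intro v hv
    rw [Function.iterate_zero_apply] at hv
    subst hv
    exact ⟨0, [], h.2.2.1⟩
  | succ n ih =>
    intro v hv
    rcases eq_or_ne v t.root with rfl | hne
    · exact ⟨0, [], h.2.2.1⟩
    have hv' : t.parent^[n] (t.parent v) = t.root := by
      rwa [← Function.iterate_succ_apply]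
    obtain ⟨d0, r0, hpr⟩ := ih (t.parent v) hv'
    rcases eq_or_ne v (heavy (t.parent v)) with hh | hh
    · obtain ⟨L, x, d, hpu, hcu⟩ := (h.2.2.2 v hne).1 hh
      rcases L with _ | ⟨p, L'⟩
      · simp only [List.nil_append] at hpu hcu
        rw [hpr] at hpu
        obtain ⟨h1, h2⟩ := List.cons_eq_cons.mp hpu
        refine ⟨d + 1, [], ?_⟩
        rw [hcu]
        have hx : id t.root = x := congrArg Prod.fst h1
        rw [hx]
      · rw [hpr, List.cons_append] at hpu
        obtain ⟨h1, h2⟩ := List.cons_eq_cons.mp hpu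
        refine ⟨d0, L' ++ [(x, d + 1)], ?_⟩
        rw [hcu, List.cons_append, ← h1]
    · have hcu := (h.2.2.2 v hne).2 hh
      exact ⟨d0, r0 ++ [(id v, 0)], by rw [hcu, hpr]; simp⟩

end
end HPL

/-- The label of the nearest common ancestor of `u` and `v` is a function of
`ℓ u` and `ℓ v` alone (uniformly over all heavy-path labeled rooted trees):
there is a decoder `F` with `ℓ (nca u v) = F (ℓ u) (ℓ v)`. -/
theorem stmt11 :
    ∃ F : List (ℕ × ℕ) → List (ℕ × ℕ) → List (ℕ × ℕ),
      ∀ (V : Type) [Fintype V] (t : ParentTree V) (heavy : V → V)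
        (id : V → ℕ) (ℓ : V → List (ℕ × ℕ)), HeavyLabeling t heavy id ℓ →
        ∀ u v a : V,
          t.Descend a u → t.Descend a v →
          (∀ b, t.Descend b u → t.Descend b v → t.Descend b a) →
          ℓ a = F (ℓ u) (ℓ v) := by
  refine ⟨HPL.F, ?_⟩
  intro V _ t heavy id ℓ h u v a hau hav hmax
  obtain ⟨nu, hnu⟩ := t.reaches_root u
  obtain ⟨nv, hnv⟩ := t.reaches_root v
  obtain ⟨du, ru, hhu⟩ := HPL.head_id h nu u hnu
  obtain ⟨dv, rv, hhv⟩ := HPL.head_id h nv v hnv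
  have hD0 := HPL.D0 (id t.root) du dv ru rv
  rw [← hhu, ← hhv] at hD0
  obtain ⟨hDu, hDv⟩ := hD0
  obtain ⟨c, hcu, hc⟩ := HPL.lemC h nu u hnu _ hDu
  obtain ⟨c', hcv, hc'⟩ := HPL.lemC h nv v hnv _ hDv
  obtain ⟨nc, hnc⟩ := t.reaches_root c
  have hcc : c' = c := HPL.inj_aux h nc c hnc c' (hc'.trans hc.symm)
  rw [hcc] at hcv
  have hca : t.Descend c a := hmax c hcu hcv
  obtain ⟨ma, hma⟩ := hau
  obtain ⟨mb, hmb⟩ := hav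
  have hDa1 : HPL.Dom (ℓ a) (ℓ u) := by
    have := HPL.dom_iter h ma u; rwa [hma] at this
  have hDa2 : HPL.Dom (ℓ a) (ℓ v) := by
    have := HPL.dom_iter h mb v; rwa [hmb] at this
  have hDac : HPL.Dom (ℓ a) (ℓ c) := by
    rw [hc]; exact HPL.D2 hDa1 hDa2
  obtain ⟨b, hbc, hb⟩ := HPL.lemC h nc c hnc _ hDac
  obtain ⟨na, hna⟩ := t.reaches_root a
  have hba : b = a := HPL.inj_aux h na a hna b hb
  rw [hba] at hbc
  have hac : a = c := HPL.descend_antisymm hbc hca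
  rw [hac, hc]
end

section
/- Two nodes u and v of a rooted forest (with heavy-path labels computed within each tree) lie in the same tree if and only if the first pairs of their labels carry the same identifier; equivalently, they have a common ancestor iff the decoder nca(ℓ(u), ℓ(v)) is nonempty. -/
/-- A finite rooted forest, given by a parent function; roots are the fixed points,
and every node eventually reaches a root. -/
structure ParentForest (V : Type*) where
  parent : V → V
  reaches : ∀ v, ∃ n, parent (parent^[n] v) = parent^[n] v

namespace ParentForest

variable {V : Type*}

def IsRoot (f : ParentForest V) (r : V) : Prop := f.parent r = r

/-- `u` is in the subtree rooted at `v`. -/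
def Descend (f : ParentForest V) (v u : V) : Prop := ∃ n, f.parent^[n] u = v

noncomputable def size (f : ParentForest V) (v : V) : ℕ := Nat.card {u | f.Descend v u}

def IsChild (f : ParentForest V) (c v : V) : Prop := c ≠ v ∧ f.parent c = v

end ParentForest

def HeavyChoiceF {V : Type*} [Fintype V] (f : ParentForest V) (heavy : V → V) : Prop :=
  ∀ v, (∃ c, f.IsChild c v) →
    f.IsChild (heavy v) v ∧ ∀ c, f.IsChild c v → f.size c ≤ f.size (heavy v)

/-- Heavy-path labeling of a rooted forest: within each tree, the root is labeled
`[(id root, 0)]`, a heavy child inherits the parent's label with last distance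
incremented, and a light child appends `(own id, 0)`; hence the identifier of the
first pair of every label is the identifier of the tree's root. -/
def HeavyLabelingF {V : Type*} [Fintype V] (f : ParentForest V) (heavy : V → V)
    (id : V → ℕ) (ℓ : V → List (ℕ × ℕ)) : Prop :=
  HeavyChoiceF f heavy ∧ Function.Injective id ∧
  (∀ r, f.IsRoot r → ℓ r = [(id r, 0)]) ∧
  ∀ v, ¬ f.IsRoot v →
    (v = heavy (f.parent v) →
      ∃ L x d, ℓ (f.parent v) = L ++ [(x, d)] ∧ ℓ v = L ++ [(x, d + 1)]) ∧
    (v ≠ heavy (f.parent v) → ℓ v = ℓ (f.parent v) ++ [(id v, 0)])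

attribute [local instance] Classical.propDecidable

namespace ParentForest

variable {V : Type*}

noncomputable def rootOf (f : ParentForest V) (v : V) : V :=
  f.parent^[Nat.find (f.reaches v)] v

lemma isRoot_rootOf (f : ParentForest V) (v : V) : f.IsRoot (f.rootOf v) :=
  Nat.find_spec (f.reaches v)

lemma descend_rootOf (f : ParentForest V) (v : V) : f.Descend (f.rootOf v) v :=
  ⟨_, rfl⟩

lemma iterate_root (f : ParentForest V) {r : V} (h : f.IsRoot r) (n : ℕ) :
    f.parent^[n] r = r := Function.iterate_fixed h n

lemma rootOf_eq (f : ParentForest V) {v r : V} {k : ℕ} (hk : f.parent^[k] v = r)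
    (hr : f.IsRoot r) : f.rootOf v = r := by
  set m := Nat.find (f.reaches v) with hm
  rcases le_total m k with h | h
  · have h1 : f.parent^[k] v = f.parent^[k - m] (f.parent^[m] v) := by
      rw [← Function.iterate_add_apply]; congr 1; omega
    have h2 : f.parent^[k - m] (f.parent^[m] v) = f.parent^[m] v :=
      f.iterate_root (f.isRoot_rootOf v) _
    rw [h1, h2] at hk
    exact hk
  · have h1 : f.parent^[m] v = f.parent^[m - k] (f.parent^[k] v) := by
      rw [← Function.iterate_add_apply]; congr 1; omega
    rw [hk, f.iterate_root hr] at h1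
    exact h1

lemma rootOf_descend (f : ParentForest V) {a v : V} (h : f.Descend a v) :
    f.rootOf v = f.rootOf a := by
  obtain ⟨n, hn⟩ := h
  refine f.rootOf_eq (k := Nat.find (f.reaches a) + n) ?_ (f.isRoot_rootOf a)
  rw [Function.iterate_add_apply, hn]; rfl

lemma rootOf_parent (f : ParentForest V) (v : V) :
    f.rootOf (f.parent v) = f.rootOf v :=
  (f.rootOf_descend ⟨1, rfl⟩).symm

lemma find_parent_lt (f : ParentForest V) {v : V} (h : ¬ f.IsRoot v) :
    Nat.find (f.reaches (f.parent v)) < Nat.find (f.reaches v) := by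
  set m := Nat.find (f.reaches v) with hm
  have hm0 : m ≠ 0 := by
    intro h0
    have hs := Nat.find_spec (f.reaches v)
    rw [← hm, h0] at hs
    exact h hs
  have hspec : f.parent (f.parent^[m - 1] (f.parent v)) = f.parent^[m - 1] (f.parent v) := by
    have : f.parent^[m - 1] (f.parent v) = f.parent^[m] v := by
      rw [← Function.iterate_succ_apply]
      congr 1; omega
    rw [this]
    exact Nat.find_spec (f.reaches v)
  have := Nat.find_min' (f.reaches (f.parent v)) hspec
  omega

end ParentForest

lemma head_id {V : Type*} [Fintype V] (f : ParentForest V) (heavy : V → V)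
    (id : V → ℕ) (ℓ : V → List (ℕ × ℕ)) (hl : HeavyLabelingF f heavy id ℓ)
    (v : V) : ∃ d, (ℓ v).head? = some (id (f.rootOf v), d) := by
  obtain ⟨-, -, hroot, hstep⟩ := hl
  generalize hn : Nat.find (f.reaches v) = n
  induction n using Nat.strong_induction_on generalizing v with
  | _ n ih =>
    by_cases hv : f.IsRoot v
    · have : f.rootOf v = v := f.rootOf_eq (k := 0) rfl hv
      rw [this, hroot v hv]
      exact ⟨0, rfl⟩
    · have hlt := f.find_parent_lt hv
      rw [hn] at hlt
      obtain ⟨d, hd⟩ := ih _ hlt (f.parent v) rfl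
      rw [f.rootOf_parent] at hd
      by_cases hh : v = heavy (f.parent v)
      · obtain ⟨L, x, e, h1, h2⟩ := (hstep v hv).1 hh
        cases L with
        | nil =>
          rw [h1] at hd
          simp only [List.nil_append, List.head?_cons, Option.some.injEq,
            Prod.mk.injEq] at hd
          refine ⟨e + 1, ?_⟩
          rw [h2]
          simp [hd.1]
        | cons a t =>
          rw [h1] at hd
          refine ⟨d, ?_⟩
          rw [h2]
          simpa using hd
      · obtain h2 := (hstep v hv).2 hh
        rw [h2]
        refine ⟨d, ?_⟩
        rcases hℓ : ℓ (f.parent v) with - | ⟨a, t⟩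
        · rw [hℓ] at hd; simp at hd
        · rw [hℓ] at hd; simpa using hd

/-- Two nodes of a rooted forest lie in the same tree (equivalently, have a common
ancestor) iff the first pairs of their heavy-path labels carry the same identifier. -/
theorem stmt12 {V : Type*} [Fintype V] (f : ParentForest V) (heavy : V → V)
    (id : V → ℕ) (ℓ : V → List (ℕ × ℕ)) (hl : HeavyLabelingF f heavy id ℓ)
    (u v : V) :
    (∃ a, f.Descend a u ∧ f.Descend a v) ↔
      ∃ p q : ℕ × ℕ, (ℓ u).head? = some p ∧ (ℓ v).head? = some q ∧ p.1 = q.1 := by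
  obtain ⟨du, hdu⟩ := head_id f heavy id ℓ hl u
  obtain ⟨dv, hdv⟩ := head_id f heavy id ℓ hl v
  constructor
  · rintro ⟨a, ha, hb⟩
    refine ⟨_, _, hdu, hdv, ?_⟩
    simp only
    rw [f.rootOf_descend ha, f.rootOf_descend hb]
  · rintro ⟨p, q, hp, hq, hpq⟩
    rw [hdu] at hp; rw [hdv] at hq
    obtain rfl := Option.some_injective _ hp
    obtain rfl := Option.some_injective _ hq
    have : f.rootOf u = f.rootOf v := hl.2.1 hpq
    exact ⟨f.rootOf u, f.descend_rootOf u, this ▸ f.descend_rootOf v⟩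
end

section
/- Suppose the vertex set of a graph is partitioned into k ≥ 2 fragments, and there is a strict total order on the edges (by weight with identifier tie-breaking). If every fragment selects its minimum outgoing edge with respect to this order, then there exist at least two fragments that select the same edge. -/
/-- If the vertices of a connected graph are partitioned into `k ≥ 2` fragments and
each fragment selects its minimum outgoing edge under a strict total order on edges,
then at least two fragments select the same edge. -/
theorem stmt14 {V ι : Type*} [Fintype V] [Fintype ι] (G : SimpleGraph V)
    (hG : G.Connected)
    (frag : V → ι) (hsurj : Function.Surjective frag) (hk : 2 ≤ Fintype.card ι)
    (lt : Sym2 V → Sym2 V → Prop) (hlt : IsStrictTotalOrder (Sym2 V) lt)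
    (sel : ι → Sym2 V)
    (hsel : ∀ i : ι,
      (∃ u v, sel i = s(u, v) ∧ G.Adj u v ∧ frag u = i ∧ frag v ≠ i) ∧
      ∀ x y, G.Adj x y → frag x = i → frag y ≠ i → sel i = s(x, y) ∨ lt (sel i) s(x, y)) :
    ∃ i j : ι, i ≠ j ∧ sel i = sel j := by
  haveI := hlt
  letI : DecidableRel lt := fun a b => Classical.propDecidable _
  letI : LinearOrder (Sym2 V) := linearOrderOfSTO lt
  haveI : Nonempty ι := Fintype.card_pos_iff.mp (by omega)
  obtain ⟨i, -, hmin⟩ := Finset.exists_min_image Finset.univ sel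
    ⟨Classical.arbitrary ι, Finset.mem_univ _⟩
  obtain ⟨⟨u, v, hesel, hadj, hfu, hfv⟩, -⟩ := hsel i
  set j := frag v with hj
  have hji : j ≠ i := hfv
  obtain ⟨-, hminj⟩ := hsel j
  have hfu' : frag u ≠ j := by rw [hfu]; exact Ne.symm hji
  rcases hminj v u hadj.symm rfl hfu' with h | h
  · exact ⟨i, j, Ne.symm hji, by rw [hesel, h, Sym2.eq_swap]⟩
  · exfalso
    have h1 := hmin j (Finset.mem_univ j)
    have h2 : lt (sel j) (sel i) := by
      rw [hesel, Sym2.eq_swap]; exact h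
    exact absurd (@lt_of_le_of_lt _ (linearOrderOfSTO lt).toPartialOrder.toPreorder _ _ _ h1 h2) (@lt_irrefl _ (linearOrderOfSTO lt).toPartialOrder.toPreorder _)
end

section
/- Consider the directed graph on fragments where each fragment points to the fragment at the other endpoint of its selected minimum outgoing edge (under a strict total order on edges). Then every cycle in this fragment digraph has length exactly 2; consequently, merging fragments along mutually selected edges strictly decreases the number of fragments, and the union of all fragments' tree edges with all selected edges is acyclic. -/
open SimpleGraph

private lemma listMax {α : Type*} (r : α → α → Prop) (hr : IsStrictTotalOrder α r)
    (P : α → Prop) :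
    ∀ l : List α, (∃ e ∈ l, P e) → ∃ e ∈ l, P e ∧ ∀ f ∈ l, P f → f ≠ e → r f e := by
  haveI := hr
  intro l
  induction l with
  | nil => rintro ⟨e, he, -⟩; simp at he
  | cons a l ih =>
    rintro ⟨e0, he0, hP0⟩
    by_cases hl : ∃ e ∈ l, P e
    · obtain ⟨e, hel, hPe, hmax⟩ := ih hl
      by_cases hPa : P a
      · rcases trichotomous_of r a e with h | h | h
        · refine ⟨e, List.mem_cons_of_mem _ hel, hPe, ?_⟩
          rintro f hf hPf hfe
          rcases List.mem_cons.mp hf with rfl | hf'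
          · exact h
          · exact hmax f hf' hPf hfe
        · subst h
          refine ⟨a, List.mem_cons_self, hPe, ?_⟩
          rintro f hf hPf hfe
          rcases List.mem_cons.mp hf with rfl | hf'
          · exact absurd rfl hfe
          · exact hmax f hf' hPf hfe
        · refine ⟨a, List.mem_cons_self, hPa, ?_⟩
          rintro f hf hPf hfa
          rcases List.mem_cons.mp hf with rfl | hf'
          · exact absurd rfl hfa
          · by_cases hfe : f = e
            · exact hfe ▸ h
            · exact trans_of r (hmax f hf' hPf hfe) h
      · refine ⟨e, List.mem_cons_of_mem _ hel, hPe, ?_⟩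
        rintro f hf hPf hfe
        rcases List.mem_cons.mp hf with rfl | hf'
        · exact absurd hPf hPa
        · exact hmax f hf' hPf hfe
    · have ha : e0 = a := by
        rcases List.mem_cons.mp he0 with rfl | hf'
        · rfl
        · exact absurd ⟨e0, hf', hP0⟩ hl
      subst ha
      refine ⟨e0, List.mem_cons_self, hP0, ?_⟩
      rintro f hf hPf hfe
      rcases List.mem_cons.mp hf with rfl | hf'
      · exact absurd rfl hfe
      · exact absurd ⟨f, hf', hPf⟩ hl

private lemma pathFirst {V : Type*} {H : SimpleGraph V} {y x w : V} (r : H.Walk y x)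
    (hr : r.IsPath) (he : s(y, w) ∈ r.edges) :
    ∃ r' : H.Walk w x, (∀ f ∈ r'.edges, f ∈ r.edges) ∧ s(y, w) ∉ r'.edges := by
  cases r with
  | nil => simp at he
  | @cons _ c _ h r2 =>
    rw [SimpleGraph.Walk.cons_isPath_iff] at hr
    have hfst : s(y, w) ∉ r2.edges := fun hm =>
      hr.2 (SimpleGraph.Walk.fst_mem_support_of_mem_edges r2 hm)
    have heq : s(y, w) = s(y, c) := by
      rcases (by simpa using he : s(y, w) = s(y, c) ∨ s(y, w) ∈ r2.edges) with h' | h'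
      · exact h'
      · exact absurd h' hfst
    have hw : w = c := Sym2.congr_right.mp heq
    subst hw
    exact ⟨r2, fun f hf => by simp [hf], hfst⟩

private lemma cycleSplit {V : Type*} {H : SimpleGraph V} {u w : V} (p : H.Walk u u)
    (hp : p.IsCycle) (he : s(u, w) ∈ p.edges) :
    ∃ q : H.Walk w u, (∀ f ∈ q.edges, f ∈ p.edges) ∧ s(u, w) ∉ q.edges := by
  cases p with
  | nil => simp at he
  | @cons _ b _ h q =>
    rw [SimpleGraph.Walk.cons_isCycle_iff] at hp
    obtain ⟨hq, hne⟩ := hp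
    rcases (by simpa using he : s(u, w) = s(u, b) ∨ s(u, w) ∈ q.edges) with h' | h'
    · have hw : w = b := Sym2.congr_right.mp h'
      subst hw
      exact ⟨q, fun f hf => by simp [hf], by rwa [h']⟩
    · have he' : s(u, w) ∈ q.reverse.edges := by
        rwa [SimpleGraph.Walk.edges_reverse, List.mem_reverse]
      obtain ⟨r', hsub, hnot⟩ := pathFirst q.reverse hq.reverse he'
      refine ⟨r'.append h.symm.toWalk, ?_, ?_⟩
      · intro f hf
        rcases (by simpa [SimpleGraph.Walk.edges_append] using hf :
            f ∈ r'.edges ∨ f = s(b, u)) with hf' | rfl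
        · have := hsub f hf'
          rw [SimpleGraph.Walk.edges_reverse, List.mem_reverse] at this
          simp [this]
        · simp [Sym2.eq_swap]
      · intro hmem
        rcases (by simpa [SimpleGraph.Walk.edges_append] using hmem :
            s(u, w) ∈ r'.edges ∨ s(u, w) = s(b, u)) with hm | hm
        · exact hnot hm
        · refine hne ?_
          have huw : s(u, b) = s(u, w) := by rw [Sym2.eq_swap, ← hm]
          rw [huw]; exact h'

private lemma crossWalk {V ι : Type*} {H : SimpleGraph V} (frag : V → ι) (a : ι) :
    ∀ {x y : V} (q : H.Walk x y), frag x ≠ a → frag y = a →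
      ∃ u w, s(u, w) ∈ q.edges ∧ frag u ≠ a ∧ frag w = a ∧ H.Adj u w := by
  intro x y q
  induction q with
  | nil => intro h1 h2; exact absurd h2 h1
  | @cons x b y h q ih =>
    intro h1 h2
    by_cases hb : frag b = a
    · exact ⟨x, b, by simp, h1, hb, h⟩
    · obtain ⟨u, w, hm, h3, h4, h5⟩ := ih hb h2
      exact ⟨u, w, by simp [hm], h3, h4, h5⟩

/-- Fragment digraph of a merging step: each fragment (a subtree of the forest `F`)
points, via `next`, to the fragment across its selected minimum outgoing edge.
Then (a) every cycle of the fragment digraph has length exactly 2, (b) the union of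
all fragments' tree edges with all selected edges is acyclic, and (c) merging
fragments along selected edges strictly decreases the number of fragments. -/
theorem stmt15 {V ι : Type*} [Fintype V] [Fintype ι] (G F : SimpleGraph V)
    (hG : G.Connected) (hFG : F ≤ G) (hFacyclic : F.IsAcyclic)
    (frag : V → ι) (hsurj : Function.Surjective frag) (hk : 2 ≤ Fintype.card ι)
    (hint : ∀ u v, F.Adj u v → frag u = frag v)
    (hconn : ∀ u v, frag u = frag v → F.Reachable u v)
    (lt : Sym2 V → Sym2 V → Prop) (hlt : IsStrictTotalOrder (Sym2 V) lt)
    (sel : ι → Sym2 V) (next : ι → ι)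
    (hsel : ∀ i : ι,
      (∃ u v, sel i = s(u, v) ∧ G.Adj u v ∧ frag u = i ∧ frag v ≠ i ∧ next i = frag v) ∧
      ∀ x y, G.Adj x y → frag x = i → frag y ≠ i → sel i = s(x, y) ∨ lt (sel i) s(x, y)) :
    (∀ (i : ι) (n : ℕ), 0 < n → next^[n] i = i → (next (next i) = i ∧ next i ≠ i)) ∧
    (F ⊔ SimpleGraph.fromEdgeSet {e | ∃ i, e = sel i}).IsAcyclic ∧
    Nat.card (F ⊔ SimpleGraph.fromEdgeSet {e | ∃ i, e = sel i}).ConnectedComponent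
      < Fintype.card ι := by
  classical
  haveI := hlt
  set H := F ⊔ SimpleGraph.fromEdgeSet {e | ∃ i, e = sel i} with hHdef
  -- edge classification
  have hedge : ∀ x y : V, H.Adj x y →
      F.Adj x y ∨ ((∃ i, s(x, y) = sel i) ∧ frag x ≠ frag y ∧ G.Adj x y) := by
    intro x y hxy
    rw [hHdef, SimpleGraph.sup_adj, SimpleGraph.fromEdgeSet_adj] at hxy
    rcases hxy with hF | ⟨⟨i, hi⟩, hxyne⟩
    · exact Or.inl hF
    · right
      obtain ⟨u, v, hs, hGa, hfu, hfv, hnext⟩ := (hsel i).1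
      have h2 : s(x, y) = s(u, v) := hi.trans hs
      rw [Sym2.eq_iff] at h2
      rcases h2 with ⟨rfl, rfl⟩ | ⟨rfl, rfl⟩
      · exact ⟨⟨i, hi⟩, by rw [hfu]; exact fun h => hfv h.symm, hGa⟩
      · exact ⟨⟨i, hi⟩, by rw [hfu]; exact fun h => hfv h, hGa.symm⟩
  have hne : ∀ i, next i ≠ i := by
    intro i
    obtain ⟨u, v, hs, hGa, hfu, hfv, hnext⟩ := (hsel i).1
    rw [hnext]; exact hfv
  -- part (a)
  have step : ∀ i, next (next i) = i ∨ lt (sel (next i)) (sel i) := by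
    intro i
    obtain ⟨u, v, hs, hGa, hfu, hfv, hnext⟩ := (hsel i).1
    have hfv' : frag v = next i := hnext.symm
    have hfu' : frag u ≠ next i := by
      rw [hfu, hnext]; exact fun h => hfv h.symm
    rcases (hsel (next i)).2 v u hGa.symm hfv' hfu' with h | h
    · left
      obtain ⟨u', v', hs', hGa', hfu2, hfv2, hnext2⟩ := (hsel (next i)).1
      have h3 : s(v, u) = s(u', v') := h ▸ hs'
      rw [Sym2.eq_iff] at h3
      rcases h3 with ⟨hv, hu⟩ | ⟨hv, hu⟩
      · rw [hnext2, ← hu, hfu]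
      · exact absurd (hu ▸ hfu2 : frag u = next i) (by rw [hfu]; exact fun hh => hne i hh.symm)
    · right
      have hswap : s(v, u) = sel i := by rw [hs, Sym2.eq_swap]
      rwa [hswap] at h
  have parta : ∀ (i : ι) (n : ℕ), 0 < n → next^[n] i = i →
      (next (next i) = i ∧ next i ≠ i) := by
    intro i n hn hiter
    refine ⟨?_, hne i⟩
    by_cases hmut : ∃ k, k < n ∧ next^[k + 2] i = next^[k] i
    · obtain ⟨k, hk, hk2⟩ := hmut
      have per : ∀ m, next^[m + (k + 2)] i = next^[m + k] i := by
        intro m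
        rw [Function.iterate_add_apply next m (k + 2) i, hk2,
          ← Function.iterate_add_apply]
      have h2n : next^[2 * n] i = i := by
        rw [two_mul, Function.iterate_add_apply, hiter, hiter]
      have key : next^[2 * n + 2] i = next^[2 * n] i := by
        have h4 := per (2 * n - k)
        rwa [show 2 * n - k + (k + 2) = 2 * n + 2 by omega,
          show 2 * n - k + k = 2 * n by omega] at h4
      have final : next^[2] i = i := by
        calc next^[2] i = next^[2 + 2 * n] i := by
              rw [Function.iterate_add_apply, h2n]
          _ = next^[2 * n + 2] i := by rw [Nat.add_comm]
          _ = next^[2 * n] i := key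
          _ = i := h2n
      simpa [Function.iterate_succ_apply'] using final
    · push_neg at hmut
      exfalso
      have hlt' : ∀ k, k < n → lt (sel (next^[k + 1] i)) (sel (next^[k] i)) := by
        intro k hk
        rcases step (next^[k] i) with h | h
        · refine absurd ?_ (hmut k hk)
          show next^[k + 2] i = next^[k] i
          rw [show k + 2 = (k + 1) + 1 from rfl, Function.iterate_succ_apply',
            Function.iterate_succ_apply']
          exact h
        · rwa [← Function.iterate_succ_apply' next k i] at h
      have chain : ∀ m, m ≤ n → 0 < m → lt (sel (next^[m] i)) (sel i) := by
        intro m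
        induction m with
        | zero => intro _ h; exact absurd h (lt_irrefl 0)
        | succ m ih =>
          intro hm _
          by_cases hm0 : m = 0
          · subst hm0
            simpa using hlt' 0 (by omega)
          · exact trans_of lt (hlt' m (by omega)) (ih (by omega) (by omega))
      have hfin := chain n le_rfl hn
      rw [hiter] at hfin
      exact irrefl_of lt _ hfin
  -- part (b)
  have partb : H.IsAcyclic := by
    intro v p hp
    set Cr : Sym2 V → Prop := fun e => ∃ x y, e = s(x, y) ∧ frag x ≠ frag y with hCrdef
    have hex : ∃ e ∈ p.edges, Cr e := by
      by_contra hno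
      push_neg at hno
      have hall : ∀ e ∈ p.edges, e ∈ F.edgeSet := by
        intro e hep
        have heH : e ∈ H.edgeSet := p.edges_subset_edgeSet hep
        induction e with
        | _ x y =>
          rw [SimpleGraph.mem_edgeSet] at heH ⊢
          rcases hedge x y heH with hF | ⟨_, hne', _⟩
          · exact hF
          · exact absurd ⟨x, y, rfl, hne'⟩ (hno _ hep)
      exact hFacyclic (p.transfer F hall) (hp.transfer hall)
    obtain ⟨e, hep, heCr, hmax⟩ := listMax lt hlt Cr p.edges hex
    obtain ⟨x, y, hexy, hexyne⟩ := heCr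
    have heH : H.Adj x y := by
      have h5 := p.edges_subset_edgeSet hep
      rw [hexy, SimpleGraph.mem_edgeSet] at h5
      exact h5
    rcases hedge x y heH with hF | ⟨⟨i, hi⟩, -, -⟩
    · exact hexyne (hint x y hF)
    obtain ⟨u, w, hs, hGa, hfu, hfw, hnext⟩ := (hsel i).1
    have heq : e = s(u, w) := by rw [hexy, hi, hs]
    have hu_sup : u ∈ p.support :=
      SimpleGraph.Walk.fst_mem_support_of_mem_edges p (heq ▸ hep)
    have hp' : (p.rotate u hu_sup).IsCycle := hp.rotate hu_sup
    have hmemrot : ∀ f, f ∈ (p.rotate u hu_sup).edges ↔ f ∈ p.edges :=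
      fun f => (p.rotate_edges u hu_sup).mem_iff
    obtain ⟨q, hqsub, hqe⟩ := cycleSplit (p.rotate u hu_sup) hp'
      ((hmemrot _).2 (heq ▸ hep))
    obtain ⟨x', y', hf, hx', hy', hadj'⟩ := crossWalk frag i q hfw hfu
    have hfp : s(x', y') ∈ p.edges := (hmemrot _).1 (hqsub _ hf)
    have hfCr : Cr s(x', y') := ⟨x', y', rfl, by rw [hy']; exact hx'⟩
    have hfe : s(x', y') ≠ e := by
      intro hcon
      rw [heq] at hcon
      exact hqe (hcon ▸ hf)
    have hGxy : G.Adj x' y' := by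
      rcases hedge x' y' hadj' with hF2 | ⟨-, -, hg⟩
      · exact absurd (hint _ _ hF2)
          (by rw [hy']; exact hx')
      · exact hg
    rcases (hsel i).2 y' x' hGxy.symm hy' hx' with hcase | hcase
    · exact hfe (by rw [hexy, hi, hcase, Sym2.eq_swap])
    · have h1 : lt e s(x', y') := by
        rw [Sym2.eq_swap (a := y')] at hcase
        rw [hexy, hi]
        exact hcase
      have h2 : lt s(x', y') e := hmax _ hfp hfCr hfe
      exact irrefl_of lt e (trans_of lt h1 h2)
  -- part (c)
  have hFH : F ≤ H := le_sup_left
  have partc : Nat.card H.ConnectedComponent < Fintype.card ι := by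
    set r : ι → V := Function.surjInv hsurj with hrdef
    have hr : ∀ i, frag (r i) = i := fun i => Function.surjInv_eq hsurj i
    set f : ι → H.ConnectedComponent := fun i => H.connectedComponentMk (r i) with hfdef
    have hfs : Function.Surjective f := by
      intro c
      refine SimpleGraph.ConnectedComponent.ind (fun v => ?_) c
      refine ⟨frag v, SimpleGraph.ConnectedComponent.sound ?_⟩
      exact (hconn (r (frag v)) v (by rw [hr])).mono hFH
    have hfni : ¬ Function.Injective f := by
      intro hinj
      have hne2 : Nonempty ι := Fintype.card_pos_iff.mp (by omega)
      obtain ⟨i⟩ := hne2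
      obtain ⟨u, v, hs, hGa, hfu, hfv, hnext⟩ := (hsel i).1
      have hH_uv : H.Adj u v := by
        rw [hHdef, SimpleGraph.sup_adj, SimpleGraph.fromEdgeSet_adj]
        exact Or.inr ⟨⟨i, hs.symm⟩, fun h => hfv (h ▸ hfu)⟩
      have hreach : H.Reachable (r i) (r (next i)) :=
        (((hconn (r i) u (by rw [hr, hfu])).mono hFH).trans hH_uv.reachable).trans
          ((hconn v (r (next i)) (by rw [hr, hnext])).mono hFH)
      have hfeq : f i = f (next i) := SimpleGraph.ConnectedComponent.sound hreach
      exact hne i (hinj hfeq).symm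
    haveI : Fintype H.ConnectedComponent := Fintype.ofFinite _
    rw [Nat.card_eq_fintype_card]
    have hle := Fintype.card_le_of_surjective f hfs
    rcases lt_or_eq_of_le hle with h | h
    · exact h
    · exact absurd ((Fintype.bijective_iff_surjective_and_card f).2 ⟨hfs, h.symm⟩).1 hfni
  exact ⟨parta, partb, partc⟩
end
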